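/- For every k ≥ −1, the functor J: {−1, 0, 1, …, k} → ([k] ↓ σ_a) from the discrete category {−1, 0, …, k} to the comma category of the ordinal sum functor σ_a: Δ_a × Δ_a → Δ_a under the object [k], defined by j ↦ (([j], [k−j−1]), id_{[k]}), is an initial functor; equivalently, its opposite {−1, 0, …, k} → (σ_aᵒᵖ ↓ [k]) is a final functor. -/

import Mathlib

open CategoryTheory CategoryTheory.Limits Simplicial Opposite

universe v u

namespace OrdSum

/-- The "ordinal sum" of two monotone maps between finite linear orders. -/
def ordJoin {m n m' n' : ℕ} (f : Fin m →o Fin m') (g : Fin n →o Fin n') :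
    Fin (m + n) →o Fin (m' + n') where
  toFun i :=
    if h : (i : ℕ) < m then Fin.castAdd n' (f ⟨i, h⟩)
    else Fin.natAdd m' (g ⟨(i : ℕ) - m, by omega⟩)
  monotone' := by
    intro i j hij
    have hij' : (i : ℕ) ≤ (j : ℕ) := hij
    dsimp only
    by_cases hi : (i : ℕ) < m <;> by_cases hj : (j : ℕ) < m
    · simp only [dif_pos hi, dif_pos hj, Fin.le_def, Fin.coe_castAdd]
      exact f.monotone (show (⟨(i:ℕ), hi⟩ : Fin m) ≤ ⟨(j:ℕ), hj⟩ from hij')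
    · simp only [dif_pos hi, dif_neg hj, Fin.le_def, Fin.coe_castAdd, Fin.coe_natAdd]
      have := (f ⟨(i:ℕ), hi⟩).isLt
      omega
    · omega
    · simp only [dif_neg hi, dif_neg hj, Fin.le_def, Fin.coe_natAdd]
      have : (⟨(i:ℕ) - m, by omega⟩ : Fin n) ≤ ⟨(j:ℕ) - m, by omega⟩ := by
        simp only [Fin.mk_le_mk]; omega
      have := g.monotone this
      omega

theorem ordJoin_id (m n : ℕ) :
    ordJoin (OrderHom.id (α := Fin m)) (OrderHom.id (α := Fin n)) = OrderHom.id := by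
  ext i
  simp only [ordJoin, OrderHom.coe_mk, OrderHom.id_coe, id_eq]
  by_cases h : (i : ℕ) < m
  · simp [dif_pos h]
  · simp only [dif_neg h, Fin.coe_natAdd]
    omega

theorem ordJoin_comp {m n m' n' m'' n'' : ℕ}
    (f : Fin m →o Fin m') (g : Fin n →o Fin n')
    (f' : Fin m' →o Fin m'') (g' : Fin n' →o Fin n'') :
    ordJoin (f'.comp f) (g'.comp g) = (ordJoin f' g').comp (ordJoin f g) := by
  ext i
  have e : ∀ {a b c d : ℕ} (F : Fin a →o Fin c) (G : Fin b →o Fin d) (x : Fin (a + b)),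
      ordJoin F G x = if h : (x : ℕ) < a then Fin.castAdd d (F ⟨x, h⟩)
        else Fin.natAdd c (G ⟨(x : ℕ) - a, by omega⟩) := fun _ _ _ => rfl
  simp only [OrderHom.comp_coe, Function.comp_apply, e]
  by_cases h : (i : ℕ) < m
  · have h1 : ((Fin.castAdd n' (f ⟨(i:ℕ), h⟩)) : ℕ) < m' := (f ⟨(i:ℕ), h⟩).isLt
    simp only [dif_pos h, dif_pos h1]
    congr 1
  · have h1 : ¬ ((Fin.natAdd m' (g ⟨(i:ℕ) - m, by omega⟩)) : ℕ) < m' := by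
      simp only [Fin.coe_natAdd]; omega
    simp only [dif_neg h]
    rw [dif_neg h1]
    simp only [OrderHom.comp_coe, Function.comp_apply, Fin.coe_natAdd, Nat.add_right_cancel_iff]
    congr 2
    apply Fin.ext
    simp

/-- The ordinal sum functor `σ : Δ × Δ → Δ`, `([k],[l]) ↦ [k+1+l]`. -/
def ordSum : SimplexCategory × SimplexCategory ⥤ SimplexCategory where
  obj x := SimplexCategory.mk (x.1.len + 1 + x.2.len)
  map {x y} f := SimplexCategory.Hom.mk
    (ordJoin (m := x.1.len + 1) (n := x.2.len + 1) (m' := y.1.len + 1) (n' := y.2.len + 1)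
      f.1.toOrderHom f.2.toOrderHom)
  map_id x := by
    apply SimplexCategory.Hom.ext
    simp only [SimplexCategory.Hom.toOrderHom_mk]
    exact ordJoin_id _ _
  map_comp {x y z} f g := by
    apply SimplexCategory.Hom.ext
    simp only [SimplexCategory.Hom.toOrderHom_mk]
    exact ordJoin_comp _ _ _ _

/-- The augmented simplex category `Δₐ`: the object `⟨n⟩` is the linear order with `n`
elements (so `⟨0⟩` is `[-1] = ∅` and `⟨n+1⟩` is `[n]`); morphisms are monotone maps. -/
@[ext] structure AugSimplex where
  len : ℕ

instance : Category.{0} AugSimplex where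
  Hom a b := Fin a.len →o Fin b.len
  id _ := OrderHom.id
  comp f g := g.comp f

/-- The inclusion `ι : Δ → Δₐ`. -/
def incl : SimplexCategory ⥤ AugSimplex where
  obj x := ⟨x.len + 1⟩
  map f := f.toOrderHom
  map_id _ := rfl
  map_comp _ _ := rfl

/-- The ordinal sum functor `σₐ : Δₐ × Δₐ → Δₐ`. -/
def ordSumAug : AugSimplex × AugSimplex ⥤ AugSimplex where
  obj x := ⟨x.1.len + x.2.len⟩
  map f := ordJoin f.1 f.2
  map_id _ := ordJoin_id _ _
  map_comp _ _ := ordJoin_comp _ _ _ _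

variable {C : Type u} [Category.{v} C]

variable (C) in
/-- Total décalage `σ* : Fun(Δᵒᵖ, C) ⥤ Fun((Δ×Δ)ᵒᵖ, C)`, precomposition with ordinal sum. -/
def decF : (SimplexCategoryᵒᵖ ⥤ C) ⥤ ((SimplexCategory × SimplexCategory)ᵒᵖ ⥤ C) :=
  (Functor.whiskeringLeft _ _ C).obj ordSum.op

variable (C) in
/-- The functor sending a bisimplicial object `Y` to `[k] ↦ Y_{k,−}`. -/
def rowsF : ((SimplexCategory × SimplexCategory)ᵒᵖ ⥤ C) ⥤
    (SimplexCategoryᵒᵖ ⥤ (SimplexCategoryᵒᵖ ⥤ C)) :=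
  (Functor.whiskeringLeft _ _ C).obj
    (prodOpEquiv (C := SimplexCategory) (D := SimplexCategory)).inverse ⋙ Functor.curry

variable (C) in
/-- The functor sending a bisimplicial object `Y` to `[k] ↦ Y_{−,k}`. -/
def colsF : ((SimplexCategory × SimplexCategory)ᵒᵖ ⥤ C) ⥤
    (SimplexCategoryᵒᵖ ⥤ (SimplexCategoryᵒᵖ ⥤ C)) :=
  (Functor.whiskeringLeft _ _ C).obj
    (CategoryTheory.Prod.swap SimplexCategoryᵒᵖ SimplexCategoryᵒᵖ ⋙
      (prodOpEquiv (C := SimplexCategory) (D := SimplexCategory)).inverse) ⋙ Functor.curry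

/-- The simplicial object `Y_{k,−}`. -/
def rowS (Y : (SimplexCategory × SimplexCategory)ᵒᵖ ⥤ C) (k : SimplexCategory) :
    SimplexCategoryᵒᵖ ⥤ C :=
  ((rowsF C).obj Y).obj (op k)

/-- The simplicial object `Y_{−,k}`. -/
def colS (Y : (SimplexCategory × SimplexCategory)ᵒᵖ ⥤ C) (k : SimplexCategory) :
    SimplexCategoryᵒᵖ ⥤ C :=
  ((colsF C).obj Y).obj (op k)

/-- `π₀` of a simplicial object: the coequalizer of the two face maps `X₁ ⇉ X₀`. -/
noncomputable def pi0F [HasCoequalizers C] : (SimplexCategoryᵒᵖ ⥤ C) ⥤ C where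
  obj X := coequalizer (X.map (SimplexCategory.δ (1 : Fin 2)).op)
    (X.map (SimplexCategory.δ (0 : Fin 2)).op)
  map {X Y} f := coequalizer.desc (f.app (op ⦋0⦌) ≫ coequalizer.π _ _) (by
    rw [← Category.assoc, ← Category.assoc, f.naturality, f.naturality,
      Category.assoc, Category.assoc, coequalizer.condition])
  map_id X := by
    apply coequalizer.hom_ext
    simp
  map_comp f g := by
    apply coequalizer.hom_ext
    simp

/-- The canonical quotient map `X₀ → π₀(X)`. -/
noncomputable def pi0π [HasCoequalizers C] (X : SimplexCategoryᵒᵖ ⥤ C) :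
    X.obj (op ⦋0⦌) ⟶ pi0F.obj X :=
  coequalizer.π _ _

variable (C) in
/-- `Y ↦ ([k] ↦ π₀(Y_{k,−}))`. -/
noncomputable def rowsPi0F [HasCoequalizers C] :
    ((SimplexCategory × SimplexCategory)ᵒᵖ ⥤ C) ⥤ (SimplexCategoryᵒᵖ ⥤ C) :=
  rowsF C ⋙ (Functor.whiskeringRight _ _ _).obj pi0F

variable (C) in
/-- `Y ↦ ([k] ↦ π₀(Y_{−,k}))`. -/
noncomputable def colsPi0F [HasCoequalizers C] :
    ((SimplexCategory × SimplexCategory)ᵒᵖ ⥤ C) ⥤ (SimplexCategoryᵒᵖ ⥤ C) :=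
  colsF C ⋙ (Functor.whiskeringRight _ _ _).obj pi0F

variable (C) in
/-- The levelwise tensor `X ⊗ K` of a simplicial object with a simplicial set,
`(X ⊗ K)ₖ = ∐_{Kₖ} Xₖ`, as a functor in `X`. -/
noncomputable def tensorF [HasColimits C] (K : SSet.{v}) :
    (SimplexCategoryᵒᵖ ⥤ C) ⥤ (SimplexCategoryᵒᵖ ⥤ C) where
  obj X :=
    { obj := fun n => ∐ (fun (_ : K.obj n) => X.obj n)
      map := fun {n m} f => Sigma.desc
        (fun s => X.map f ≫ Sigma.ι (fun (_ : K.obj m) => X.obj m) (K.map f s))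
      map_id := fun n => by
        apply Sigma.hom_ext
        intro s
        simp [FunctorToTypes.map_id_apply]
      map_comp := fun {n m l} f g => by
        apply Sigma.hom_ext
        intro s
        simp [FunctorToTypes.map_comp_apply] }
  map {X Y} f :=
    { app := fun n => Limits.Sigma.desc
        (fun (s : K.obj n) => f.app n ≫ Sigma.ι (fun (_ : K.obj n) => Y.obj n) s)
      naturality := fun {n m} g => by
        apply Sigma.hom_ext
        intro s
        simp }
  map_id X := by
    ext n : 2
    simp
  map_comp f g := by
    ext n : 2
    simp

variable (C) in
/-- The canonical projection `X ⊗ K ⟶ X`, induced by `K ⟶ Δ[0]`. -/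
noncomputable def tensorProj [HasColimits C] (K : SSet.{v}) :
    tensorF C K ⟶ 𝟭 (SimplexCategoryᵒᵖ ⥤ C) where
  app X :=
    { app := fun n => Sigma.desc (fun _ => 𝟙 (X.obj n))
      naturality := fun {n m} g => by
        apply Sigma.hom_ext
        intro s
        simp [tensorF] }
  naturality {X Y} f := by
    ext n : 2
    apply Sigma.hom_ext
    intro s
    simp [tensorF]



/-- The splitting index: `sigmaIdx β p` is the number of elements `j` of the source with
`β j < p`; equivalently `j_β + 1` where `j_β` is the largest index landing in the first block. -/
def sigmaIdx {m n : ℕ} (β : Fin m →o Fin n) (p : ℕ) : ℕ :=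
  (Finset.univ.filter fun j : Fin m => ((β j) : ℕ) < p).card

theorem sigmaIdx_le {m n : ℕ} (β : Fin m →o Fin n) (p : ℕ) : sigmaIdx β p ≤ m := by
  classical
  exact le_trans (Finset.card_filter_le _ _) (by simp)

theorem lt_sigmaIdx_iff {m n : ℕ} (β : Fin m →o Fin n) (p : ℕ) (j : Fin m) :
    (j : ℕ) < sigmaIdx β p ↔ ((β j) : ℕ) < p := by
  classical
  constructor
  · intro h
    by_contra hb
    push_neg at hb
    have hsub : (Finset.univ.filter fun j' : Fin m => ((β j') : ℕ) < p) ⊆ Finset.Iio j := by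
      intro x hx
      simp only [Finset.mem_filter, Finset.mem_univ, true_and] at hx
      simp only [Finset.mem_Iio]
      by_contra hxj
      push_neg at hxj
      have hmono := β.monotone hxj
      rw [Fin.le_def] at hmono
      omega
    have hc := Finset.card_le_card hsub
    rw [Fin.card_Iio] at hc
    exact absurd h (by unfold sigmaIdx; omega)
  · intro h
    have hsub : Finset.Iic j ⊆ (Finset.univ.filter fun j' : Fin m => ((β j') : ℕ) < p) := by
      intro x hx
      simp only [Finset.mem_Iic] at hx
      simp only [Finset.mem_filter, Finset.mem_univ, true_and]
      have hmono := β.monotone hx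
      rw [Fin.le_def] at hmono
      omega
    have hc := Finset.card_le_card hsub
    rw [Fin.card_Iic] at hc
    unfold sigmaIdx
    omega

/-- The first component of the splitting of `β` at `p`. -/
def splitFst {m n : ℕ} (β : Fin m →o Fin n) (p : ℕ) : Fin (sigmaIdx β p) →o Fin p where
  toFun r := ⟨((β ⟨r.val, lt_of_lt_of_le r.2 (sigmaIdx_le β p)⟩) : ℕ),
    (lt_sigmaIdx_iff β p _).mp r.2⟩
  monotone' := by
    intro a b hab
    have h := β.monotone (show (⟨a.val, lt_of_lt_of_le a.2 (sigmaIdx_le β p)⟩ : Fin m) ≤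
      ⟨b.val, lt_of_lt_of_le b.2 (sigmaIdx_le β p)⟩ from hab)
    exact h

/-- The second component of the splitting of `β` at `p`. -/
def splitSnd {m n : ℕ} (β : Fin m →o Fin n) (p : ℕ) (hp : p ≤ n) :
    Fin (m - sigmaIdx β p) →o Fin (n - p) where
  toFun r := ⟨((β ⟨sigmaIdx β p + r.val, by have := r.2; omega⟩) : ℕ) - p, by
    have h1 := (β ⟨sigmaIdx β p + r.val, by have := r.2; omega⟩).2
    have h2 : ¬ ((sigmaIdx β p + r.val) < sigmaIdx β p) := by omega
    have h3 := (lt_sigmaIdx_iff β p ⟨sigmaIdx β p + r.val, by have := r.2; omega⟩).not.mp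
      (by simpa using h2)
    simp only [not_lt] at h3
    omega⟩
  monotone' := by
    intro a b hab
    have hav : a.val ≤ b.val := hab
    dsimp only
    simp only [Fin.mk_le_mk]
    apply Nat.sub_le_sub_right
    exact β.monotone (Fin.mk_le_mk.mpr (by omega))


/-- The functor `J : {−1, 0, …, k} ⥤ ([k] ↓ σₐ)` sending `j` to `(([j], [k−j−1]), id)`.
Here the object `b` of `Δₐ` has `b.len` elements (so `b = [k]` with `k = b.len − 1`), the
discrete category `Fin (b.len + 1)` encodes `{−1, 0, …, k}` via `p = j + 1`, and the comma
category `[k] ↓ σₐ` is `StructuredArrow b ordSumAug`. -/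
def Jfun (b : AugSimplex) :
    Discrete (Fin (b.len + 1)) ⥤ StructuredArrow b ordSumAug :=
  Discrete.functor fun p => StructuredArrow.mk
    (Y := ((⟨p.val⟩ : AugSimplex), (⟨b.len - p.val⟩ : AugSimplex)))
    (eqToHom (by
      apply AugSimplex.ext
      have := p.2
      show b.len = p.val + (b.len - p.val)
      omega))

/-- Reinterpret a morphism of `AugSimplex` as an order hom. -/
def toOrd {a a' : AugSimplex} (f : a ⟶ a') : Fin a.len →o Fin a'.len := f

theorem eqToHom_coe {a a' : AugSimplex} (h : a = a') (i : Fin a.len) :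
    ((toOrd (eqToHom h) i : Fin a'.len) : ℕ) = i := by
  subst h; rfl

theorem toOrd_comp {a a' a'' : AugSimplex} (u : a ⟶ a') (v : a' ⟶ a'') (i : Fin a.len) :
    toOrd (u ≫ v) i = toOrd v (toOrd u i) := rfl

theorem toOrd_map {x y : AugSimplex × AugSimplex} (φ : x ⟶ y) (i : Fin (x.1.len + x.2.len)) :
    toOrd (ordSumAug.map φ) i = ordJoin (toOrd φ.1) (toOrd φ.2) i := rfl

theorem Jfun_hom (b : AugSimplex) (q : Fin (b.len + 1)) :
    ((Jfun b).obj ⟨q⟩).hom = eqToHom (by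
      apply AugSimplex.ext
      have := q.2
      show b.len = q.val + (b.len - q.val)
      omega) := rfl

theorem ordJoin_apply_lt {m n m' n' : ℕ} (f : Fin m →o Fin m') (g : Fin n →o Fin n')
    (i : Fin (m + n)) (h : (i : ℕ) < m) :
    ((ordJoin f g i : Fin (m' + n')) : ℕ) = ((f ⟨(i : ℕ), h⟩ : Fin m') : ℕ) := by
  show ((if h' : (i : ℕ) < m then Fin.castAdd n' (f ⟨i, h'⟩) else Fin.natAdd m' (g ⟨(i : ℕ) - m, by omega⟩) : Fin (m' + n')) : ℕ) = _
  rw [dif_pos h]; rfl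

theorem ordJoin_apply_ge {m n m' n' : ℕ} (f : Fin m →o Fin m') (g : Fin n →o Fin n')
    (i : Fin (m + n)) (h : ¬ (i : ℕ) < m) :
    ((ordJoin f g i : Fin (m' + n')) : ℕ)
      = m' + ((g ⟨(i : ℕ) - m, by have := i.2; omega⟩ : Fin n') : ℕ) := by
  show ((if h' : (i : ℕ) < m then Fin.castAdd n' (f ⟨i, h'⟩) else Fin.natAdd m' (g ⟨(i : ℕ) - m, by omega⟩) : Fin (m' + n')) : ℕ) = _
  rw [dif_neg h]; rfl

theorem splitFst_coe {m n : ℕ} (β : Fin m →o Fin n) (p : ℕ) (r : Fin (sigmaIdx β p)) :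
    ((splitFst β p r : Fin p) : ℕ)
      = ((β ⟨(r : ℕ), lt_of_lt_of_le r.2 (sigmaIdx_le β p)⟩ : Fin n) : ℕ) := rfl

/-- The second component of the splitting, recast to land in `Fin n₂`. -/
def splitSnd' {m n₁ n₂ : ℕ} (β : Fin m →o Fin (n₁ + n₂)) :
    Fin (m - sigmaIdx β n₁) →o Fin n₂ where
  toFun r := ⟨((splitSnd β n₁ (Nat.le_add_right _ _)) r : ℕ), by
    have := ((splitSnd β n₁ (Nat.le_add_right _ _)) r).2; omega⟩
  monotone' a b hab :=
    (splitSnd β n₁ (Nat.le_add_right _ _)).monotone hab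

theorem splitSnd'_coe {m n₁ n₂ : ℕ} (β : Fin m →o Fin (n₁ + n₂))
    (r : Fin (m - sigmaIdx β n₁)) :
    ((splitSnd' β r : Fin n₂) : ℕ)
      = ((β ⟨sigmaIdx β n₁ + r.val, by have := r.2; omega⟩ : Fin (n₁ + n₂)) : ℕ) - n₁ := rfl

theorem ordJoin_inj {m n m' n' : ℕ} {f f' : Fin m →o Fin m'} {g g' : Fin n →o Fin n'}
    (h : ordJoin f g = ordJoin f' g') : f = f' ∧ g = g' := by
  constructor
  · ext r
    have h0 := congrArg (fun φ : Fin (m + n) →o Fin (m' + n') =>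
      ((φ ⟨r.val, by omega⟩ : Fin (m' + n')) : ℕ)) h
    rw [ordJoin_apply_lt f g _ r.2, ordJoin_apply_lt f' g' _ r.2] at h0
    exact h0
  · ext r
    have h0 := congrArg (fun φ : Fin (m + n) →o Fin (m' + n') =>
      ((φ ⟨m + r.val, by have := r.2; omega⟩ : Fin (m' + n')) : ℕ)) h
    rw [ordJoin_apply_ge f g _ (by simp), ordJoin_apply_ge f' g' _ (by simp)] at h0
    have hr : (⟨((⟨m + r.val, by have := r.2; omega⟩ : Fin (m + n)) : ℕ) - m,
        by have := r.2; omega⟩ : Fin n) = r := by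
      apply Fin.ext; simp
    rw [hr] at h0
    omega

theorem ordJoin_split {m n₁ n₂ : ℕ} (β : Fin m →o Fin (n₁ + n₂))
    (i : Fin (sigmaIdx β n₁ + (m - sigmaIdx β n₁))) :
    ((ordJoin (splitFst β n₁) (splitSnd' β) i : Fin (n₁ + n₂)) : ℕ)
      = ((β ⟨(i : ℕ), by have := i.2; have := sigmaIdx_le β n₁; omega⟩ : Fin (n₁ + n₂)) : ℕ) := by
  by_cases h : (i : ℕ) < sigmaIdx β n₁
  · rw [ordJoin_apply_lt _ _ _ h, splitFst_coe]
  · rw [ordJoin_apply_ge _ _ _ h, splitSnd'_coe]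
    have hge : n₁ ≤ ((β ⟨(i : ℕ), by have := i.2; have := sigmaIdx_le β n₁; omega⟩
        : Fin (n₁ + n₂)) : ℕ) := by
      have := (lt_sigmaIdx_iff β n₁ ⟨(i : ℕ), by
        have := i.2; have := sigmaIdx_le β n₁; omega⟩).not.mp (by
          simp only [not_lt]
          exact le_of_not_gt h)
      omega
    have harg : (⟨sigmaIdx β n₁ + (((i : ℕ)) - sigmaIdx β n₁), by
        have := i.2; have := sigmaIdx_le β n₁; omega⟩ : Fin m)
        = ⟨(i : ℕ), by have := i.2; have := sigmaIdx_le β n₁; omega⟩ := by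
      apply Fin.ext
      show sigmaIdx β n₁ + ((i : ℕ) - sigmaIdx β n₁) = (i : ℕ)
      omega
    rw [harg]
    omega

/-- **Lemma 2.13 (`finality`).**
For every `k ≥ −1` (i.e. for every object `b` of the augmented simplex category), the functor
`J : {−1, 0, 1, …, k} ⥤ ([k] ↓ σₐ)` from the discrete category to the comma category of the
ordinal sum functor `σₐ : Δₐ × Δₐ ⥤ Δₐ` under `[k]`, given by `j ↦ (([j], [k−j−1]), id)`,
is an initial functor (equivalently, its opposite is a final functor). -/
theorem discrete_to_comma_initial (b : AugSimplex) : (Jfun b).Initial := by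
  constructor
  intro c
  have key : ∀ (q : Fin (b.len + 1)) (f : (Jfun b).obj ⟨q⟩ ⟶ c) (i : Fin b.len),
      ((toOrd c.hom i : Fin (c.right.1.len + c.right.2.len)) : ℕ)
        = ((ordJoin (toOrd f.right.1) (toOrd f.right.2)
            ⟨(i : ℕ), (show (i : ℕ) < (q : ℕ) + (b.len - (q : ℕ)) by
              have := i.2; have := q.2; omega)⟩ : Fin (c.right.1.len + c.right.2.len)) : ℕ) := by
    intro q f i
    have hw := StructuredArrow.w f
    have hval : ((toOrd (((Jfun b).obj ⟨q⟩).hom ≫ ordSumAug.map f.right) i :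
        Fin (c.right.1.len + c.right.2.len)) : ℕ)
        = ((toOrd c.hom i : Fin (c.right.1.len + c.right.2.len)) : ℕ) := by rw [hw]
    rw [toOrd_comp] at hval
    have harg : toOrd (((Jfun b).obj ⟨q⟩).hom) i
        = (⟨(i : ℕ), (show (i : ℕ) < (q : ℕ) + (b.len - (q : ℕ)) by
            have := i.2; have := q.2; omega)⟩ : Fin ((q : ℕ) + (b.len - (q : ℕ)))) := by
      apply Fin.ext
      rw [Jfun_hom]
      exact eqToHom_coe _ i
    rw [harg] at hval
    exact hval.symm
  -- uniform description of the structural map of `(Jfun b).obj ⟨q⟩`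
  have hargAll : ∀ (q : Fin (b.len + 1)) (i : Fin b.len),
      toOrd (((Jfun b).obj ⟨q⟩).hom) i
        = (⟨(i : ℕ), (show (i : ℕ) < (q : ℕ) + (b.len - (q : ℕ)) by
            have := i.2; have := q.2; omega)⟩ : Fin ((q : ℕ) + (b.len - (q : ℕ)))) := by
    intro q i
    apply Fin.ext
    rw [Jfun_hom]
    exact eqToHom_coe _ i
  have hple : sigmaIdx (toOrd c.hom) c.right.1.len ≤ b.len := sigmaIdx_le _ _
  have hple' : sigmaIdx (toOrd c.hom) c.right.1.len < b.len + 1 := by omega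
  -- the canonical object of the comma category
  have hw : ((Jfun b).obj ⟨⟨sigmaIdx (toOrd c.hom) c.right.1.len, hple'⟩⟩).hom
      ≫ ordSumAug.map ((splitFst (toOrd c.hom) c.right.1.len, splitSnd' (toOrd c.hom)) :
        ((⟨sigmaIdx (toOrd c.hom) c.right.1.len⟩ : AugSimplex),
          (⟨b.len - sigmaIdx (toOrd c.hom) c.right.1.len⟩ : AugSimplex)) ⟶ c.right)
      = c.hom := by
    apply OrderHom.ext
    funext i
    apply Fin.ext
    show ((ordJoin (splitFst (toOrd c.hom) c.right.1.len) (splitSnd' (toOrd c.hom))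
        (toOrd (((Jfun b).obj ⟨⟨sigmaIdx (toOrd c.hom) c.right.1.len, hple'⟩⟩).hom) i)
        : Fin (c.right.1.len + c.right.2.len)) : ℕ)
      = ((toOrd c.hom i : Fin (c.right.1.len + c.right.2.len)) : ℕ)
    rw [hargAll]
    exact (ordJoin_split (toOrd c.hom) _).trans rfl
  let g : (Jfun b).obj ⟨⟨sigmaIdx (toOrd c.hom) c.right.1.len, hple'⟩⟩ ⟶ c :=
    StructuredArrow.homMk
      ((splitFst (toOrd c.hom) c.right.1.len, splitSnd' (toOrd c.hom)) :
        ((⟨sigmaIdx (toOrd c.hom) c.right.1.len⟩ : AugSimplex),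
          (⟨b.len - sigmaIdx (toOrd c.hom) c.right.1.len⟩ : AugSimplex)) ⟶ c.right) hw
  let X₀ : CostructuredArrow (Jfun b) c :=
    CostructuredArrow.mk (Y := ⟨⟨sigmaIdx (toOrd c.hom) c.right.1.len, hple'⟩⟩) g
  -- index of an arbitrary object
  have hidx : ∀ (q : Fin (b.len + 1)) (f : (Jfun b).obj ⟨q⟩ ⟶ c),
      (q : ℕ) = sigmaIdx (toOrd c.hom) c.right.1.len := by
    intro q f
    have hiff : ∀ i : Fin b.len, (i : ℕ) < (q : ℕ) ↔
        ((toOrd c.hom i : Fin (c.right.1.len + c.right.2.len)) : ℕ) < c.right.1.len := by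
      intro i
      have hkey := key q f i
      by_cases hcase : (i : ℕ) < (q : ℕ)
      · simp only [hcase, true_iff]
        rw [hkey, ordJoin_apply_lt _ _ _ hcase]
        exact (toOrd f.right.1 _).2
      · simp only [hcase, false_iff, not_lt]
        rw [hkey, ordJoin_apply_ge _ _ _ hcase]
        omega
    by_contra hne
    rcases Nat.lt_or_ge (q : ℕ) (sigmaIdx (toOrd c.hom) c.right.1.len) with hlt | hge
    · have hi : (q : ℕ) < b.len := by omega
      have h1 : ((q : ℕ)) < (q : ℕ) :=
        (hiff ⟨(q : ℕ), hi⟩).mpr ((lt_sigmaIdx_iff (toOrd c.hom) c.right.1.len ⟨(q : ℕ), hi⟩).mp hlt)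
      omega
    · have hlt' : sigmaIdx (toOrd c.hom) c.right.1.len < (q : ℕ) := by omega
      have hi : sigmaIdx (toOrd c.hom) c.right.1.len < b.len := by have := q.2; omega
      have h1 := (hiff ⟨sigmaIdx (toOrd c.hom) c.right.1.len, hi⟩).mp hlt'
      have h2 : sigmaIdx (toOrd c.hom) c.right.1.len
          < sigmaIdx (toOrd c.hom) c.right.1.len :=
        (lt_sigmaIdx_iff (toOrd c.hom) c.right.1.len
          ⟨sigmaIdx (toOrd c.hom) c.right.1.len, hi⟩).mpr h1
      omega
  -- uniqueness of the morphism to `c`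
  have hhom : ∀ (f : (Jfun b).obj ⟨⟨sigmaIdx (toOrd c.hom) c.right.1.len, hple'⟩⟩ ⟶ c),
      f = g := by
    intro f
    apply StructuredArrow.hom_ext
    have hcomp := (StructuredArrow.w f).trans (StructuredArrow.w g).symm
    rw [Jfun_hom] at hcomp
    have hmapeq : ordSumAug.map f.right = ordSumAug.map g.right :=
      (cancel_epi _).mp hcomp
    have hmapeq' : ordJoin (toOrd f.right.1) (toOrd f.right.2)
        = ordJoin (toOrd g.right.1) (toOrd g.right.2) := hmapeq
    have hpair := ordJoin_inj hmapeq'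
    have h1 : f.right = (f.right.1, f.right.2) := rfl
    have h2 : g.right = (g.right.1, g.right.2) := rfl
    rw [h1, h2]
    exact Prod.ext hpair.1 hpair.2
  have hobj : ∀ X : CostructuredArrow (Jfun b) c, X = X₀ := by
    intro X
    obtain ⟨⟨q⟩, ⟨⟨⟩⟩, f⟩ := X
    have hq : q = (⟨sigmaIdx (toOrd c.hom) c.right.1.len, hple'⟩ : Fin (b.len + 1)) :=
      Fin.ext (hidx q f)
    subst hq
    rw [hhom f]
    rfl
  exact IsConnected.of_induct (j₀ := X₀) fun p hp _ j => by rw [hobj j]; exact hp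


end OrdSum
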